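/- arXiv:2108.00451 — 2 statements merged into one kernel-verified Lean document; each statement's English description precedes it below -/
import Mathlib

section
/- Let A be a finite alphabet and let L be a factorial language over A, i.e., a set of finite words over A closed under taking subwords. Define the pinning space Ω ⊆ A^ℤ × {0,1}^ℤ by: (u,v) ∈ Ω if and only if (1) whenever i < j and v_{i+1} = … = v_j = 0, the word u_i u_{i+1} … u_j belongs to L, and (2) whenever i < j and v_i = v_j = 1, the word u_i u_{i+1} … u_j does not belong to L. Then for any u ∈ A^ℤ and any v, v' with (u,v) ∈ Ω and (u,v') ∈ Ω, if v_k = v'_k = 1 for some k ∈ ℤ, then v_m = v'_m for all m ≥ k. -/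
/-- The finite word `u_i u_{i+1} … u_j` of a two-sided sequence `u`. -/
def wordOf {A : Type*} (u : ℤ → A) (i j : ℤ) : List A :=
  (List.range (j - i + 1).toNat).map (fun k => u (i + (k : ℕ)))

/-- Key step: if `v` and `v'` agree on `[k, m)`, both pin at `k`, and `v m = true`,
then `v' m = true`. -/
lemma stmt16_key {A : Type*} (L : Set (List A)) (u : ℤ → A) (v v' : ℤ → Bool)
    (h1' : ∀ i j : ℤ, i < j → (∀ k : ℤ, i < k → k ≤ j → v' k = false) →
      wordOf u i j ∈ L)
    (h2 : ∀ i j : ℤ, i < j → v i = true → v j = true → wordOf u i j ∉ L)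
    (k m : ℤ) (hk' : v' k = true) (hm : k < m)
    (hag : ∀ i : ℤ, k ≤ i → i < m → v i = v' i)
    (hvm : v m = true) : v' m = true := by
  classical
  by_contra hvm'
  rw [Bool.not_eq_true] at hvm'
  have hp : ∃ d : ℕ, k ≤ m - 1 - (d : ℤ) ∧ v' (m - 1 - (d : ℤ)) = true := by
    refine ⟨(m - 1 - k).toNat, by omega, ?_⟩
    rw [show m - 1 - ((m - 1 - k).toNat : ℤ) = k by omega]
    exact hk'
  set d := Nat.find hp with hd
  obtain ⟨hik, hv'i⟩ := Nat.find_spec hp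
  set i := m - 1 - (d : ℤ) with hi
  have hilt : i < m := by omega
  have hfalse : ∀ j : ℤ, i < j → j ≤ m → v' j = false := by
    intro j hj1 hj2
    rcases eq_or_lt_of_le hj2 with rfl | hj2'
    · exact hvm'
    · have hnat : ((m - 1 - j).toNat : ℤ) = m - 1 - j := Int.toNat_of_nonneg (by omega)
      have hlt : (m - 1 - j).toNat < d := by omega
      have hmin := Nat.find_min hp hlt
      cases hc : v' j with
      | false => rfl
      | true =>
        exact absurd ⟨by omega,
          by rwa [show m - 1 - ((m - 1 - j).toNat : ℤ) = j by omega]⟩ hmin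
  have hmem := h1' i m hilt hfalse
  have hvi : v i = true := by rw [hag i (by omega) hilt]; exact hv'i
  exact h2 i m hilt hvi hvm hmem

/-- in the pinning space of a factorial language, two pinning sequences for
the same `u` that both have a pin (a `1`) at position `k` agree at all positions `m ≥ k`.
Here pins are encoded by `true` and `0`'s by `false`. -/
theorem stmt_16 {A : Type*} [Fintype A] (L : Set (List A))
    (hfac : ∀ w ∈ L, ∀ w' : List A, w' <:+: w → w' ∈ L)
    (u : ℤ → A) (v v' : ℤ → Bool)
    (h1 : ∀ i j : ℤ, i < j → (∀ k : ℤ, i < k → k ≤ j → v k = false) →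
      wordOf u i j ∈ L)
    (h2 : ∀ i j : ℤ, i < j → v i = true → v j = true → wordOf u i j ∉ L)
    (h1' : ∀ i j : ℤ, i < j → (∀ k : ℤ, i < k → k ≤ j → v' k = false) →
      wordOf u i j ∈ L)
    (h2' : ∀ i j : ℤ, i < j → v' i = true → v' j = true → wordOf u i j ∉ L)
    (k : ℤ) (hk : v k = true) (hk' : v' k = true) :
    ∀ m : ℤ, k ≤ m → v m = v' m := by
  have main : ∀ n : ℕ, ∀ m : ℤ, k ≤ m → m ≤ k + n → v m = v' m := by
    intro n
    induction n using Nat.strong_induction_on with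
    | _ n ih =>
      intro m hm1 hm2
      rcases eq_or_lt_of_le hm1 with rfl | hm
      · rw [hk, hk']
      · have hag : ∀ i : ℤ, k ≤ i → i < m → v i = v' i := by
          intro i hi1 hi2
          exact ih (i - k).toNat (by omega) i hi1 (by omega)
        have hag' : ∀ i : ℤ, k ≤ i → i < m → v' i = v i :=
          fun i a b => (hag i a b).symm
        cases hvm : v m with
        | true => exact (stmt16_key L u v v' h1' h2 k m hk' hm hag hvm).symm
        | false =>
          cases h : v' m with
          | false => rfl
          | true =>
            have := stmt16_key L u v' v h1 h2' k m hk hm hag' h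
            rw [this] at hvm
            exact Bool.noConfusion hvm
  intro m hm
  exact main (m - k).toNat m hm (by omega)
end

section
/- Let m ≥ 0, 0 ≤ b ≤ c, L > 0, and let S be a nonempty closed subset of [b,c] × [−L,L]^m ⊆ ℝ^{m+1}. Let Z = ⋃_{γ ∈ S} Z_γ ⊆ (ℕ × ℤ^{m+1})^ℤ. Suppose a word u = ((x_i, y^0_i, …, y^m_i))_{i=0}^{j−1} of length j ≥ 1 occurs as a factor of some point of Z, and set n_k = y^k_0 + … + y^k_{j−1} for k = 0, …, m. Then there exists γ = (γ_0, …, γ_m) ∈ S such that γ_k ∈ ((n_k − 1)/j, (n_k + 1)/j) for every k = 0, …, m, the word (x_0, …, x_{j−1}) belongs to L_j(X_{e^{γ_0}}), and for each k = 0, …, m the word (y^k_0, …, y^k_{j−1}) occurs as a factor of some point of Y_{γ_k}. -/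
/-- The β-transformation `T_β(x) = βx - ⌊βx⌋`. -/
noncomputable def betaMap (β : ℝ) (x : ℝ) : ℝ := β * x - ⌊β * x⌋

/-- The language `L_n(X_β)` of the β-shift. -/
def betaLang (β : ℝ) (n : ℕ) : Set (Fin n → ℤ) :=
  {u | ∃ r : ℝ, 0 ≤ r ∧ r < 1 ∧ ∀ i : Fin n, u i = ⌊β * (betaMap β)^[(i : ℕ)] r⌋}

/-- The two-sided β-shift. -/
def betaShift (β : ℝ) : Set (ℤ → ℕ) :=
  {x | ∀ i : ℤ, ∀ n : ℕ, 0 < n →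
    (fun k : Fin n => ((x (i + (k : ℕ)) : ℤ))) ∈ betaLang β n}

/-- The bi-infinite Sturmian sequence of slope `γ`. -/
noncomputable def sturmSeq (γ : ℝ) : ℤ → ℤ := fun i => ⌊((i : ℝ) + 1) * γ⌋ - ⌊(i : ℝ) * γ⌋

/-- The Sturmian system `Y_γ`. -/
noncomputable def sturmSystem (γ : ℝ) : Set (ℤ → ℤ) :=
  closure {z : ℤ → ℤ | ∃ n : ℤ, z = fun i => sturmSeq γ (i + n)}

/-- `Z_γ = X_{e^{γ₀}} × Y_{γ₀} × ⋯ × Y_{γ_m}`, as a subset of `(ℕ × ℤ^{m+1})^ℤ`. -/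
noncomputable def Zset (m : ℕ) (γ : Fin (m + 1) → ℝ) :
    Set (ℤ → ℕ × (Fin (m + 1) → ℤ)) :=
  {z | (fun i => (z i).1) ∈ betaShift (Real.exp (γ 0)) ∧
       ∀ k : Fin (m + 1), (fun i => (z i).2 k) ∈ sturmSystem (γ k)}

lemma sturm_window_sum (γ : ℝ) (w : ℤ → ℤ) (hw : w ∈ sturmSystem γ) (l : ℤ) (j : ℕ) :
    ∃ q : ℤ, (∑ i : Fin j, w (l + (i : ℕ))) = ⌊((q : ℝ) + j) * γ⌋ - ⌊(q : ℝ) * γ⌋ := by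
  set A : Set (ℤ → ℤ) := {z : ℤ → ℤ | ∃ n : ℤ, z = fun i => sturmSeq γ (i + n)} with hA
  set F : (ℤ → ℤ) → ℤ := fun z => ∑ i : Fin j, z (l + (i : ℕ)) with hF
  have hFc : Continuous F := by
    apply continuous_finset_sum
    intro i _
    exact continuous_apply _
  have h1 : F w ∈ F '' A := by
    have h2 : F w ∈ closure (F '' A) :=
      (image_closure_subset_closure_image hFc) (Set.mem_image_of_mem F hw)
    rwa [(isClosed_discrete _).closure_eq] at h2
  obtain ⟨z, ⟨n, rfl⟩, hz⟩ := h1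
  refine ⟨l + n, ?_⟩
  show F w = _
  rw [← hz]
  have key : ∀ i : ℕ, sturmSeq γ (l + (i : ℕ) + n)
      = ⌊(((l + n : ℤ) : ℝ) + ((i : ℕ) + 1 : ℕ)) * γ⌋ - ⌊(((l + n : ℤ) : ℝ) + (i : ℕ)) * γ⌋ := by
    intro i
    unfold sturmSeq
    congr 2 <;> push_cast <;> ring
  show (∑ i : Fin j, sturmSeq γ (l + (i : ℕ) + n)) = _
  rw [Fin.sum_univ_eq_sum_range (fun i : ℕ => sturmSeq γ (l + (i : ℕ) + n)) j]
  rw [Finset.sum_congr rfl (fun i _ => key i)]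
  rw [Finset.sum_range_sub (fun k : ℕ => ⌊(((l + n : ℤ) : ℝ) + (k : ℕ)) * γ⌋)]
  push_cast
  ring_nf

lemma floor_window_bounds (γ : ℝ) (j : ℕ) (hj : 1 ≤ j) (q : ℤ) :
    ((((⌊((q : ℝ) + j) * γ⌋ - ⌊(q : ℝ) * γ⌋ : ℤ) : ℝ)) - 1) / j < γ ∧
    γ < (((⌊((q : ℝ) + j) * γ⌋ - ⌊(q : ℝ) * γ⌋ : ℤ) : ℝ) + 1) / j := by
  have hjpos : (0 : ℝ) < j := by exact_mod_cast hj
  have h1 : ((⌊((q : ℝ) + j) * γ⌋ : ℝ)) ≤ ((q : ℝ) + j) * γ := Int.floor_le _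
  have h2 : ((q : ℝ) + j) * γ - 1 < (⌊((q : ℝ) + j) * γ⌋ : ℝ) := Int.sub_one_lt_floor _
  have h3 : ((⌊(q : ℝ) * γ⌋ : ℝ)) ≤ (q : ℝ) * γ := Int.floor_le _
  have h4 : (q : ℝ) * γ - 1 < (⌊(q : ℝ) * γ⌋ : ℝ) := Int.sub_one_lt_floor _
  constructor
  · rw [div_lt_iff₀ hjpos]
    push_cast
    nlinarith
  · rw [lt_div_iff₀ hjpos]
    push_cast
    nlinarith

/-- if a word `u` of length `j ≥ 1` occurs as a factor of a point of
`Z = ⋃_{γ ∈ S} Z_γ`, with Sturmian weights `n_k`, then there is `γ ∈ S` with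
`γ_k ∈ ((n_k−1)/j, (n_k+1)/j)` for all `k`, the β-coordinate word in `L_j(X_{e^{γ₀}})`,
and each Sturmian coordinate word a factor of a point of `Y_{γ_k}`. -/
theorem stmt_19 (m : ℕ) (b c L : ℝ) (hb : 0 ≤ b) (hbc : b ≤ c) (hL : 0 < L)
    (S : Set (Fin (m + 1) → ℝ)) (hSne : S.Nonempty) (hScl : IsClosed S)
    (hSsub : ∀ γ ∈ S, γ 0 ∈ Set.Icc b c ∧
      ∀ k : Fin (m + 1), k ≠ 0 → γ k ∈ Set.Icc (-L) L)
    (j : ℕ) (hj : 1 ≤ j) (u : Fin j → ℕ × (Fin (m + 1) → ℤ))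
    (hu : ∃ z ∈ ⋃ γ ∈ S, Zset m γ, ∃ l : ℤ, ∀ i : Fin j, u i = z (l + (i : ℕ))) :
    ∃ γ ∈ S,
      (∀ k : Fin (m + 1),
        ((∑ i, (u i).2 k : ℤ) - 1 : ℝ) / j < γ k ∧
        γ k < ((∑ i, (u i).2 k : ℤ) + 1 : ℝ) / j) ∧
      (fun i : Fin j => (((u i).1 : ℤ))) ∈ betaLang (Real.exp (γ 0)) j ∧
      (∀ k : Fin (m + 1), ∃ w ∈ sturmSystem (γ k), ∃ l : ℤ,
        ∀ i : Fin j, (u i).2 k = w (l + (i : ℕ))) := by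
  obtain ⟨z, hz, l, hul⟩ := hu
  simp only [Set.mem_iUnion] at hz
  obtain ⟨γ, hγS, hzB, hzS⟩ := hz
  refine ⟨γ, hγS, ?_, ?_, ?_⟩
  · intro k
    have hw := hzS k
    obtain ⟨q, hq⟩ := sturm_window_sum (γ k) _ hw l j
    have hsum : (∑ i, (u i).2 k : ℤ) = ⌊((q : ℝ) + j) * γ k⌋ - ⌊(q : ℝ) * γ k⌋ := by
      rw [← hq]
      exact Finset.sum_congr rfl fun i _ => by rw [hul i]
    rw [hsum]
    exact floor_window_bounds (γ k) j hj q
  · have h := hzB l j hj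
    convert h using 2 with i
    rw [hul i]
  · intro k
    exact ⟨_, hzS k, l, fun i => by rw [hul i]⟩
end
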